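/- (Proof Step 9b: no cycle of length 3.) Let V, E satisfy E1–E3, R1 and C1, and let F satisfy F1–F6. For all points u1, v1, w1, x1, w2, x2, x3: it is impossible that deleting(u1,v1,w1,x1), F(w1,x1), deleting(v1,w1,w2,x2), F(w2,x2), inside(u1,v1,w1,w2), deleting(v1,w2,u1,x3) and F(u1,x3) all hold simultaneously. -/

import Mathlib

/-- Points are elements of ℝ². -/
abbrev Pt := ℝ × ℝ

/-- det((a,b),(c,d)) = a·d − b·c. -/
def pdet (p q : Pt) : ℝ := p.1 * q.2 - p.2 * q.1

/-- `left u v w`: w lies strictly to the left of the oriented line through u and v,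
or on the open ray from u through v. -/
def left (u v w : Pt) : Prop :=
  0 < pdet (v - u) (w - u) ∨ ∃ t : ℝ, 0 < t ∧ w - u = t • (v - u)

/-- `inter u v w x`: the closed segments uv and wx share a point that is not an
endpoint of both. -/
def inter (u v w x : Pt) : Prop :=
  ¬(u = w ∧ v = x) ∧ ¬(u = x ∧ v = w) ∧
  ((left u v w ∧ left v u x) ∨ (left u v x ∧ left v u w)) ∧
  ((left w x u ∧ left x w v) ∨ (left w x v ∧ left x w u))

/-- `inside u v w x`: x lies in the closed triangle Δuvw but is distinct from u, v, w. -/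
def inside (u v w x : Pt) : Prop := left u v x ∧ left v w x ∧ left w u x

/-- `deleting E F u v w x`: the edge wx prohibits that uv is in F. -/
def deleting (E F : Pt → Pt → Prop) (u v w x : Pt) : Prop :=
  E u v ∧ E w x ∧ inter u v w x ∧ E u w ∧ E v w ∧
    ((¬ E u x ∧ ¬ E v x) ∨ F w x)

/-- A finite path a = p₀, p₁, …, pₙ = b with R(pᵢ, pᵢ₊₁) for all i < n. -/
def FPath (R : Pt → Pt → Prop) (a b : Pt) : Prop :=
  ∃ (n : ℕ) (p : ℕ → Pt), p 0 = a ∧ p n = b ∧ ∀ i < n, R (p i) (p (i + 1))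

/-- `R` connects `V`: any two vertices are joined by a finite `R`-path. -/
def Connects (R : Pt → Pt → Prop) (V : Pt → Prop) : Prop :=
  ∀ a b, V a → V b → FPath R a b

namespace Step9bAux

def dd (a b c : Pt) : ℝ := (b.1 - a.1) * (c.2 - a.2) - (b.2 - a.2) * (c.1 - a.1)

lemma pdet_eq (a b c : Pt) : pdet (b - a) (c - a) = dd a b c := by
  simp [pdet, dd]

lemma left_dd {a b c : Pt} :
    left a b c ↔ (0 < dd a b c ∨ ∃ t : ℝ, 0 < t ∧ c - a = t • (b - a)) := by
  unfold left; rw [pdet_eq]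

lemma param_fst {z q r : Pt} {t : ℝ} (h : z - q = t • (r - q)) :
    z.1 - q.1 = t * (r.1 - q.1) := by
  have := congrArg Prod.fst h; simpa using this

lemma param_snd {z q r : Pt} {t : ℝ} (h : z - q = t • (r - q)) :
    z.2 - q.2 = t * (r.2 - q.2) := by
  have := congrArg Prod.snd h; simpa using this

lemma dd_affine (a b : Pt) {z q r : Pt} {t : ℝ} (h : z - q = t • (r - q)) :
    dd a b z = (1 - t) * dd a b q + t * dd a b r := by
  have h1 := param_fst h
  have h2 := param_snd h
  simp only [dd]
  linear_combination (b.1 - a.1) * h2 - (b.2 - a.2) * h1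

lemma dd_self1 (a b : Pt) : dd a b a = 0 := by simp only [dd]; ring
lemma dd_self2 (a b : Pt) : dd a b b = 0 := by simp only [dd]; ring
lemma dd_swap12 (a b c : Pt) : dd b a c = - dd a b c := by simp only [dd]; ring
lemma dd_swap23 (a b c : Pt) : dd a c b = - dd a b c := by simp only [dd]; ring
lemma dd_rot (a b c : Pt) : dd b c a = dd a b c := by simp only [dd]; ring
lemma dd_rot' (a b c : Pt) : dd c a b = dd a b c := by simp only [dd]; ring
lemma dd_sum (u v w z : Pt) : dd u v z + dd v w z + dd w u z = dd u v w := by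
  simp only [dd]; ring

lemma nonneg_of_left {a b c : Pt} (h : left a b c) : 0 ≤ dd a b c := by
  rcases left_dd.mp h with h | ⟨t, ht, htr⟩
  · linarith
  · rw [dd_affine a b htr, dd_self1, dd_self2]; norm_num

lemma left_zero_ray {a b c : Pt} (h : left a b c) (h0 : dd a b c = 0) :
    ∃ t : ℝ, 0 < t ∧ c - a = t • (b - a) := by
  rcases left_dd.mp h with h | h
  · linarith
  · exact h

lemma left_of_pos {a b c : Pt} (h : 0 < dd a b c) : left a b c := left_dd.mpr (Or.inl h)

lemma between_left {a b z : Pt} {t : ℝ} (h : z - a = t • (b - a)) (h0 : 0 < t) (h1 : t < 1) :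
    left a b z ∧ left b a z := by
  refine ⟨left_dd.mpr (Or.inr ⟨t, h0, h⟩), left_dd.mpr (Or.inr ⟨1 - t, by linarith, ?_⟩)⟩
  rw [show z - b = (z - a) - (b - a) from by abel, h]
  module

lemma smul_cancel {e : Pt} (he : e ≠ 0) {s t : ℝ} (h : s • e = t • e) : s = t := by
  have h2 : (s - t) • e = 0 := by rw [sub_smul, h, sub_self]
  rcases smul_eq_zero.mp h2 with h3 | h3
  · linarith [sub_eq_zero.mp h3]
  · exact absurd h3 he

lemma pdet_parallel (s t : ℝ) (e : Pt) : pdet (s • e) (t • e) = 0 := by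
  simp [pdet]; ring

lemma dd_zero_of_params {x y q r : Pt} {k1 k2 : ℝ}
    (h1 : x - q = k1 • (r - q)) (h2 : y - q = k2 • (r - q)) : dd x y q = 0 := by
  have hxy : y - x = (k2 - k1) • (r - q) := by
    rw [sub_smul, ← h1, ← h2]; abel
  have hqx : q - x = (-k1) • (r - q) := by rw [neg_smul, ← h1]; abel
  rw [← pdet_eq, hxy, hqx, pdet_parallel]

lemma collinear_param {a b z : Pt} (hab : a ≠ b) (h : dd a b z = 0) :
    ∃ k : ℝ, z - a = k • (b - a) := by
  simp only [dd] at h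
  have hab' : b.1 - a.1 ≠ 0 ∨ b.2 - a.2 ≠ 0 := by
    by_contra hc
    push_neg at hc
    exact hab (Prod.ext_iff.mpr ⟨by linarith [hc.1], by linarith [hc.2]⟩)
  rcases hab' with h1 | h1
  · refine ⟨(z.1 - a.1) / (b.1 - a.1), Prod.ext_iff.mpr ⟨?_, ?_⟩⟩
    · show z.1 - a.1 = _
      rw [Prod.smul_fst, Prod.fst_sub]
      rw [smul_eq_mul, div_mul_cancel₀ _ h1]
    · show z.2 - a.2 = _
      rw [Prod.smul_snd, Prod.snd_sub]
      rw [smul_eq_mul]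
      field_simp
      linear_combination h
  · refine ⟨(z.2 - a.2) / (b.2 - a.2), Prod.ext_iff.mpr ⟨?_, ?_⟩⟩
    · show z.1 - a.1 = _
      rw [Prod.smul_fst, Prod.fst_sub, smul_eq_mul]
      field_simp
      linear_combination -h
    · show z.2 - a.2 = _
      rw [Prod.smul_snd, Prod.snd_sub]
      rw [smul_eq_mul, div_mul_cancel₀ _ h1]

lemma exists_combo {A B : ℝ} (hA : A ≠ 0) (hAB : A * B ≤ 0) :
    ∃ r : ℝ, 0 < r ∧ r ≤ 1 ∧ (1 - r) * A + r * B = 0 := by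
  have hApos : 0 < A * A := mul_self_pos.mpr hA
  have hD : 0 < A * (A - B) := by nlinarith
  have hDne : A - B ≠ 0 := by
    intro h; rw [h, mul_zero] at hD; exact lt_irrefl 0 hD
  refine ⟨A / (A - B), ?_, ?_, ?_⟩
  · rcases lt_or_gt_of_ne hA with h | h
    · exact div_pos_iff.mpr (Or.inr ⟨h, by nlinarith⟩)
    · exact div_pos_iff.mpr (Or.inl ⟨h, by nlinarith⟩)
  · rcases lt_or_gt_of_ne hDne with h | h
    · have hA' : A < 0 := by nlinarith
      have hB : 0 ≤ B := by nlinarith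
      rw [show A / (A - B) = (-A) / (B - A) from by rw [← neg_div_neg_eq, neg_sub],
        div_le_one (by linarith)]
      linarith
    · rw [div_le_one h]
      have hA' : 0 < A := by nlinarith
      nlinarith
  · field_simp; ring

lemma unit_range {A B α : ℝ} (heq : (1 - α) * A + α * B = 0)
    (hW : (0 ≤ A ∧ B ≤ 0) ∨ (0 ≤ B ∧ A ≤ 0)) (hnb : ¬(A = 0 ∧ B = 0)) :
    0 ≤ α ∧ α ≤ 1 := by
  constructor
  · by_contra hc
    push_neg at hc
    rcases hW with ⟨h1, h2⟩ | ⟨h1, h2⟩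
    · have hA0 : A ≤ 0 := by nlinarith
      have hB0 : 0 ≤ B := by nlinarith
      exact hnb ⟨le_antisymm hA0 h1, le_antisymm h2 hB0⟩
    · have hA0 : 0 ≤ A := by nlinarith
      have hB0 : B ≤ 0 := by nlinarith
      exact hnb ⟨le_antisymm h2 hA0, le_antisymm hB0 h1⟩
  · by_contra hc
    push_neg at hc
    rcases hW with ⟨h1, h2⟩ | ⟨h1, h2⟩
    · have hA0 : A ≤ 0 := by nlinarith
      have hB0 : 0 ≤ B := by nlinarith
      exact hnb ⟨le_antisymm hA0 h1, le_antisymm h2 hB0⟩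
    · have hA0 : 0 ≤ A := by nlinarith
      have hB0 : B ≤ 0 := by nlinarith
      exact hnb ⟨le_antisymm h2 hA0, le_antisymm hB0 h1⟩

lemma combo_product_neg {A B ν : ℝ} (hA : A ≠ 0) (h0 : 0 < ν) (h1 : ν < 1)
    (heq : (1 - ν) * A + ν * B = 0) : A * B < 0 := by
  have hid : ν * (A * B) = -((1 - ν) * (A * A)) := by linear_combination A * heq
  nlinarith [mul_self_pos.mpr hA]

lemma sign_transfer {A B C : ℝ} (h1 : A * B < 0) (h2 : 0 < B * C) : A * C < 0 := by
  have hB : B ≠ 0 := by intro h; rw [h, zero_mul] at h2; exact lt_irrefl 0 h2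
  have hBB := mul_self_pos.mpr hB
  nlinarith

lemma sign_transfer' {A B C : ℝ} (h1 : A * B < 0) (h2 : B * C < 0) : 0 < A * C := by
  have hB : B ≠ 0 := by intro h; rw [h, zero_mul] at h2; exact lt_irrefl 0 h2
  have hBB := mul_self_pos.mpr hB
  nlinarith

lemma inter_of_products {a b c d : Pt} (h1 : dd a b c * dd a b d < 0)
    (h2 : dd c d a * dd c d b < 0) : inter a b c d := by
  refine ⟨?_, ?_, ?_, ?_⟩
  · rintro ⟨rfl, rfl⟩; rw [dd_self1, dd_self2] at h1; simp at h1
  · rintro ⟨rfl, rfl⟩; rw [dd_self2, dd_self1] at h1; simp at h1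
  · rcases lt_trichotomy (dd a b c) 0 with h | h | h
    · right
      refine ⟨left_of_pos (by nlinarith), left_of_pos ?_⟩
      rw [dd_swap12]; linarith
    · rw [h, zero_mul] at h1; exact absurd h1 (lt_irrefl 0)
    · left
      refine ⟨left_of_pos h, left_of_pos ?_⟩
      rw [dd_swap12]; nlinarith
  · rcases lt_trichotomy (dd c d a) 0 with h | h | h
    · right
      refine ⟨left_of_pos (by nlinarith), left_of_pos ?_⟩
      rw [dd_swap12]; linarith
    · rw [h, zero_mul] at h2; exact absurd h2 (lt_irrefl 0)
    · left
      refine ⟨left_of_pos h, left_of_pos ?_⟩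
      rw [dd_swap12]; nlinarith

lemma inter_swap1 {a b c d : Pt} (h : inter a b c d) : inter b a c d := by
  obtain ⟨g1, g2, c3, c4⟩ := h
  exact ⟨fun hh => g2 ⟨hh.2, hh.1⟩, fun hh => g1 ⟨hh.2, hh.1⟩, by tauto, by tauto⟩

end Step9bAux

open Step9bAux

set_option maxHeartbeats 2000000 in
theorem proof_step9b
    (V : Pt → Prop) (E F : Pt → Pt → Prop)
    (hE1 : ∀ u, ¬ E u u)
    (hE2 : ∀ u v, E u v → E v u)
    (hE3 : ∀ u v, E u v → V u ∧ V v)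
    (hR1 : ∀ u v w x, E u v ∧ E w x ∧ inter u v w x → E u w ∨ E v x)
    (hC1 : ∀ u v w x, inside u v w x ∧ E u v ∧ E v w ∧ E w u ∧ V x → E u x)
    (hF1 : ∀ u v, F u v → F v u)
    (hF2 : ∀ u v, F u v → E u v)
    (hF3 : ∀ u v w x, F u v ∧ F w x → ¬ inter u v w x)
    (hF4 : ∀ u v w, left u v w ∧ left v u w ∧ V w → ¬ F u v)
    (hF5 : ∀ u v w x, F u v ∧ E w x ∧ inter u v w x → E u w ∨ E v w)
    (hF6 : ∀ u v w x, F u v ∧ E w x ∧ inter u v w x → E u x ∨ E v x)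
    (u1 v1 w1 x1 w2 x2 x3 : Pt)
    (h1 : deleting E F u1 v1 w1 x1)
    (h2 : F w1 x1)
    (h3 : deleting E F v1 w1 w2 x2)
    (h4 : F w2 x2)
    (h5 : inside u1 v1 w1 w2)
    (h6 : deleting E F v1 w2 u1 x3)
    (h7 : F u1 x3) :
    False := by
  classical
  have hEuv : E u1 v1 := h1.1
  have hEwx1 : E w1 x1 := h1.2.1
  have hI1c3 := h1.2.2.1.2.2.1
  have hI1c4 := h1.2.2.1.2.2.2
  have hEuw : E u1 w1 := h1.2.2.2.1
  have hEvw : E v1 w1 := h1.2.2.2.2.1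
  have hEpx2 : E w2 x2 := h3.2.1
  have hI3 := h3.2.2.1
  have hI3c3 := hI3.2.2.1
  have hI3c4 := hI3.2.2.2
  have hEvp : E v1 w2 := h3.2.2.2.1
  have hEwp : E w1 w2 := h3.2.2.2.2.1
  have hEux3 : E u1 x3 := h6.2.1
  have hI6c3 := h6.2.2.1.2.2.1
  have hI6c4 := h6.2.2.1.2.2.2
  have hne : ∀ {a b : Pt}, E a b → a ≠ b := fun {a b} h heq => hE1 b (heq ▸ h)
  have huv : u1 ≠ v1 := hne hEuv
  have huw : u1 ≠ w1 := hne hEuw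
  have hvw : v1 ≠ w1 := hne hEvw
  have hwx1 : w1 ≠ x1 := hne hEwx1
  have hvp : v1 ≠ w2 := hne hEvp
  have hwp : w1 ≠ w2 := hne hEwp
  have hpx2 : w2 ≠ x2 := hne hEpx2
  have hux3 : u1 ≠ x3 := hne hEux3
  have Vu1 : V u1 := (hE3 _ _ hEuv).1
  have Vv1 : V v1 := (hE3 _ _ hEuv).2
  have Vw1 : V w1 := (hE3 _ _ hEwx1).1
  have Vx1 : V x1 := (hE3 _ _ hEwx1).2
  have Vp : V w2 := (hE3 _ _ hEpx2).1
  have Vx3 : V x3 := (hE3 _ _ hEux3).2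
  have killF4 : ∀ (aa bb zz : Pt), F aa bb → V zz → ∀ t : ℝ,
      zz - aa = t • (bb - aa) → 0 < t → t < 1 → False := by
    intro aa bb zz hf hv t ht h0' h1'
    obtain ⟨hl1, hl2⟩ := between_left ht h0' h1'
    exact hF4 aa bb zz ⟨hl1, hl2, hv⟩ hf
  obtain ⟨hi1, hi2, hi3⟩ := h5
  have hT1p : 0 ≤ dd u1 v1 w2 := nonneg_of_left hi1
  have hT2p : 0 ≤ dd v1 w1 w2 := nonneg_of_left hi2
  have hT3p : 0 ≤ dd w1 u1 w2 := nonneg_of_left hi3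
  have hsum := dd_sum u1 v1 w1 w2
  rcases eq_or_lt_of_le hT1p with hA | hT1pos
  · -- CASE A : w2 on the line u1 v1
    obtain ⟨a, ha0, ha⟩ := left_zero_ray hi1 hA.symm
    have he : v1 - u1 ≠ 0 := sub_ne_zero.mpr (Ne.symm huv)
    have hNpa : dd u1 x3 w2 = a * dd u1 x3 v1 := by
      rw [dd_affine u1 x3 ha, dd_self1]; ring
    obtain ⟨χ, hχ⟩ : ∃ χ : ℝ, x3 - u1 = χ • (v1 - u1) := by
      rcases hI6c4 with ⟨hl1, hl2⟩ | ⟨hl1, hl2⟩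
      · have hNv : 0 ≤ dd u1 x3 v1 := nonneg_of_left hl1
        have h2' : 0 ≤ dd x3 u1 w2 := nonneg_of_left hl2
        rw [dd_swap12] at h2'
        have hNvle : dd u1 x3 v1 ≤ 0 := by nlinarith
        have hNv0 : dd u1 x3 v1 = 0 := le_antisymm hNvle hNv
        obtain ⟨t, ht0, htr⟩ := left_zero_ray hl1 hNv0
        refine ⟨t⁻¹, ?_⟩
        rw [htr, smul_smul, inv_mul_cancel₀ (ne_of_gt ht0), one_smul]
      · have hNp : 0 ≤ dd u1 x3 w2 := nonneg_of_left hl1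
        have h2' : 0 ≤ dd x3 u1 v1 := nonneg_of_left hl2
        rw [dd_swap12] at h2'
        have hNvge : 0 ≤ dd u1 x3 v1 := by nlinarith
        have hNv0 : dd x3 u1 v1 = 0 := by rw [dd_swap12]; linarith
        obtain ⟨t, ht0, htr⟩ := left_zero_ray hl2 hNv0
        have ht1 : t ≠ 1 := by
          intro h1'; rw [h1', one_smul] at htr
          exact huv (sub_left_inj.mp htr).symm
        have hkey : v1 - u1 = (1 - t) • (x3 - u1) := by
          rw [show v1 - u1 = (v1 - x3) - (u1 - x3) from by abel, htr]
          module
        refine ⟨(1 - t)⁻¹, ?_⟩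
        rw [hkey, smul_smul, inv_mul_cancel₀ (sub_ne_zero.mpr (Ne.symm ht1)), one_smul]
    have hvw2 : v1 - w2 = (1 - a) • (v1 - u1) := by
      rw [show v1 - w2 = (v1 - u1) - (w2 - u1) from by abel, ha]; module
    have huw2 : u1 - w2 = (-a) • (v1 - u1) := by
      rw [show u1 - w2 = -(w2 - u1) from by abel, ha]; module
    have hx3w2 : x3 - w2 = (χ - a) • (v1 - u1) := by
      rw [show x3 - w2 = (x3 - u1) - (w2 - u1) from by abel, ha, hχ]; module
    have hw2v : w2 - v1 = (a - 1) • (v1 - u1) := by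
      rw [show w2 - v1 = (w2 - u1) - (v1 - u1) from by abel, ha]; module
    have hx3v : x3 - v1 = (χ - 1) • (v1 - u1) := by
      rw [show x3 - v1 = (x3 - u1) - (v1 - u1) from by abel, hχ]; module
    have huv' : u1 - v1 = (-1 : ℝ) • (v1 - u1) := by module
    rcases lt_trichotomy a 1 with halt | haeq | hagt
    · have hdd0 : dd w2 v1 u1 = 0 := by
        rw [← pdet_eq, hvw2, huw2, pdet_parallel]
      have hnl : ¬ left w2 v1 u1 := by
        intro hl
        obtain ⟨t, ht0, htr⟩ := left_zero_ray hl hdd0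
        rw [huw2, hvw2, smul_smul] at htr
        have := smul_cancel he htr
        nlinarith
      have hx : left w2 v1 x3 := by
        rcases hI6c3 with ⟨h1', h2'⟩ | ⟨h1', h2'⟩
        · exact h2'
        · exact absurd h2' hnl
      have hdd1 : dd w2 v1 x3 = 0 := by
        rw [← pdet_eq, hvw2, hx3w2, pdet_parallel]
      obtain ⟨t, ht0, htr⟩ := left_zero_ray hx hdd1
      rw [hx3w2, hvw2, smul_smul] at htr
      have hts := smul_cancel he htr
      have hχa : a < χ := by nlinarith
      have hχ0 : 0 < χ := lt_trans ha0 hχa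
      have hbet : w2 - u1 = (a * χ⁻¹) • (x3 - u1) := by
        rw [ha, hχ, smul_smul, mul_assoc, inv_mul_cancel₀ (ne_of_gt hχ0), mul_one]
      exact killF4 u1 x3 w2 h7 Vp _ hbet (mul_pos ha0 (inv_pos.mpr hχ0))
        (by rw [← div_eq_mul_inv]; exact (div_lt_one hχ0).mpr hχa)
    · exact hvp (by rw [haeq, one_smul] at ha; exact (sub_left_inj.mp ha).symm)
    · have hdd0 : dd v1 w2 u1 = 0 := by
        rw [← pdet_eq, hw2v, huv', pdet_parallel]
      have hnl : ¬ left v1 w2 u1 := by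
        intro hl
        obtain ⟨t, ht0, htr⟩ := left_zero_ray hl hdd0
        rw [huv', hw2v, smul_smul] at htr
        have := smul_cancel he htr
        nlinarith
      have hx : left v1 w2 x3 := by
        rcases hI6c3 with ⟨h1', h2'⟩ | ⟨h1', h2'⟩
        · exact absurd h1' hnl
        · exact h1'
      have hdd1 : dd v1 w2 x3 = 0 := by
        rw [← pdet_eq, hw2v, hx3v, pdet_parallel]
      obtain ⟨t, ht0, htr⟩ := left_zero_ray hx hdd1
      rw [hx3v, hw2v, smul_smul] at htr
      have hts := smul_cancel he htr
      have hχ1 : 1 < χ := by nlinarith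
      have hχ0 : 0 < χ := by linarith
      have hbet : v1 - u1 = χ⁻¹ • (x3 - u1) := by
        rw [hχ, smul_smul, inv_mul_cancel₀ (ne_of_gt hχ0), one_smul]
      exact killF4 u1 x3 v1 h7 Vv1 _ hbet (inv_pos.mpr hχ0)
        (by nlinarith [inv_mul_cancel₀ (ne_of_gt hχ0), inv_pos.mpr hχ0])
  · -- CASE B : nondegenerate triangle
    have hΔ : 0 < dd u1 v1 w1 := by linarith
    have hT1x1 : dd u1 v1 x1 ≤ 0 := by
      rcases hI1c3 with ⟨-, hl⟩ | ⟨-, hl⟩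
      · have := nonneg_of_left hl; rw [dd_swap12] at this; linarith
      · exfalso
        have := nonneg_of_left hl; rw [dd_swap12] at this; linarith
    have hT23 : 0 < dd v1 w1 x1 ∨ 0 < dd w1 u1 x1 := by
      by_contra hc
      push_neg at hc
      have := dd_sum u1 v1 w1 x1
      linarith [hc.1, hc.2]
    have hW : (0 ≤ dd w1 x1 u1 ∧ dd w1 x1 v1 ≤ 0) ∨
        (0 ≤ dd w1 x1 v1 ∧ dd w1 x1 u1 ≤ 0) := by
      rcases hI1c4 with ⟨hl1, hl2⟩ | ⟨hl1, hl2⟩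
      · left
        refine ⟨nonneg_of_left hl1, ?_⟩
        have := nonneg_of_left hl2; rw [dd_swap12] at this; linarith
      · right
        refine ⟨nonneg_of_left hl1, ?_⟩
        have := nonneg_of_left hl2; rw [dd_swap12] at this; linarith
    have hSu : dd w1 x1 u1 ≠ 0 := by
      intro h0'
      obtain ⟨k, hk⟩ := collinear_param hwx1 h0'
      have he1 : dd u1 v1 u1 = (1 - k) * dd u1 v1 w1 + k * dd u1 v1 x1 := dd_affine _ _ hk
      rw [dd_self1] at he1
      have hk0 : 0 < k := by nlinarith
      have hk1 : k ≤ 1 := by nlinarith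
      rcases lt_or_eq_of_le hk1 with hk1' | hk1'
      · exact killF4 w1 x1 u1 h2 Vu1 k hk hk0 hk1'
      · rw [hk1', one_smul] at hk
        have hux1 : u1 = x1 := sub_left_inj.mp hk
        rcases hI1c4 with ⟨-, hl2⟩ | ⟨-, hl2⟩
        · rw [← hux1] at hl2
          have h3' := nonneg_of_left hl2
          rw [dd_swap23] at h3'
          linarith
        · rw [← hux1] at hl2
          obtain ⟨t, ht0, htr⟩ := left_zero_ray hl2 (dd_self1 _ _)
          rw [sub_self] at htr
          rcases smul_eq_zero.mp htr.symm with h' | h'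
          · linarith
          · exact huw (sub_eq_zero.mp h').symm
    have hSv : dd w1 x1 v1 ≠ 0 := by
      intro h0'
      obtain ⟨k, hk⟩ := collinear_param hwx1 h0'
      have he1 : dd u1 v1 v1 = (1 - k) * dd u1 v1 w1 + k * dd u1 v1 x1 := dd_affine _ _ hk
      rw [dd_self2] at he1
      have hk0 : 0 < k := by nlinarith
      have hk1 : k ≤ 1 := by nlinarith
      rcases lt_or_eq_of_le hk1 with hk1' | hk1'
      · exact killF4 w1 x1 v1 h2 Vv1 k hk hk0 hk1'
      · rw [hk1', one_smul] at hk
        have hvx1 : v1 = x1 := sub_left_inj.mp hk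
        rw [← hvx1] at h2
        exact hF3 w1 v1 w2 x2 ⟨h2, h4⟩ (inter_swap1 hI3)
    have hSuSv : dd w1 x1 u1 * dd w1 x1 v1 < 0 := by
      rcases hW with ⟨h1', h2'⟩ | ⟨h1', h2'⟩
      · exact mul_neg_of_pos_of_neg (lt_of_le_of_ne h1' (Ne.symm hSu)) (lt_of_le_of_ne h2' hSv)
      · have := mul_neg_of_pos_of_neg (lt_of_le_of_ne h1' (Ne.symm hSv)) (lt_of_le_of_ne h2' hSu)
        nlinarith
    have key : ∀ z : Pt, dd w1 x1 z = 0 → 0 ≤ dd u1 v1 z → 0 ≤ dd v1 w1 z →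
        0 ≤ dd w1 u1 z → ∃ θ : ℝ, z - w1 = θ • (x1 - w1) ∧ 0 ≤ θ ∧ θ ≤ 1 := by
      intro z hz e1 e2 e3
      obtain ⟨θ, hθ⟩ := collinear_param hwx1 hz
      have g1 : dd u1 v1 z = (1 - θ) * dd u1 v1 w1 + θ * dd u1 v1 x1 := dd_affine _ _ hθ
      have g2 : dd v1 w1 z = (1 - θ) * dd v1 w1 w1 + θ * dd v1 w1 x1 := dd_affine _ _ hθ
      have g3 : dd w1 u1 z = (1 - θ) * dd w1 u1 w1 + θ * dd w1 u1 x1 := dd_affine _ _ hθ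
      rw [dd_self2] at g2
      rw [dd_self1] at g3
      refine ⟨θ, hθ, ?_, ?_⟩
      · rcases hT23 with h' | h' <;> nlinarith
      · nlinarith
    by_cases hSp0 : dd w1 x1 w2 = 0
    · -- P0
      obtain ⟨τ, hτ⟩ := collinear_param hwx1 hSp0
      have g1 : dd u1 v1 w2 = (1 - τ) * dd u1 v1 w1 + τ * dd u1 v1 x1 := dd_affine _ _ hτ
      have g2 : dd v1 w1 w2 = (1 - τ) * dd v1 w1 w1 + τ * dd v1 w1 x1 := dd_affine _ _ hτ
      have g3 : dd w1 u1 w2 = (1 - τ) * dd w1 u1 w1 + τ * dd w1 u1 x1 := dd_affine _ _ hτ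
      rw [dd_self2] at g2
      rw [dd_self1] at g3
      have hτ0 : 0 ≤ τ := by rcases hT23 with h' | h' <;> nlinarith
      have hτ0' : 0 < τ := by
        rcases lt_or_eq_of_le hτ0 with h' | h'
        · exact h'
        · exfalso
          rw [← h', zero_smul] at hτ
          exact hwp (sub_eq_zero.mp hτ).symm
      have hτ1 : τ < 1 := by nlinarith
      exact killF4 w1 x1 w2 h2 Vp τ hτ hτ0' hτ1
    · rcases lt_trichotomy (dd w1 x1 v1 * dd w1 x1 w2) 0 with hneg | hzero | hpos
      · -- P+ : w2 on the u1-side of the line w1 x1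
        have hSuSp : 0 < dd w1 x1 u1 * dd w1 x1 w2 := sign_transfer' hSuSv hneg
        have hT2ppos : 0 < dd v1 w1 w2 := by
          rcases lt_or_eq_of_le hT2p with h' | h'
          · exact h'
          · exfalso
            obtain ⟨b, hb0, hb⟩ := left_zero_ray hi2 h'.symm
            have hb1 : dd w1 u1 w2 = (1 - b) * dd w1 u1 v1 + b * dd w1 u1 w1 :=
              dd_affine _ _ hb
            rw [dd_self1, dd_rot' u1 v1 w1] at hb1
            have hble : b ≤ 1 := by nlinarith
            have hbne : b ≠ 1 := by
              intro h''; rw [h'', one_smul] at hb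
              exact hwp (sub_left_inj.mp hb).symm
            have hblt : b < 1 := lt_of_le_of_ne hble hbne
            have hSpeq : dd w1 x1 w2 = (1 - b) * dd w1 x1 v1 + b * dd w1 x1 w1 :=
              dd_affine _ _ hb
            rw [dd_self1] at hSpeq
            have hidq : dd w1 x1 v1 * dd w1 x1 w2
                = (1 - b) * (dd w1 x1 v1 * dd w1 x1 v1) := by rw [hSpeq]; ring
            nlinarith [mul_self_pos.mpr hSv]
        have hnlwv : ¬ left w1 v1 w2 := by
          intro hl
          have := nonneg_of_left hl; rw [dd_swap12] at this; linarith
        have hT2x2 : dd v1 w1 x2 ≤ 0 := by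
          rcases hI3c3 with ⟨-, hl⟩ | ⟨-, hl⟩
          · have := nonneg_of_left hl; rw [dd_swap12] at this; linarith
          · exact absurd hl hnlwv
        obtain ⟨δ, hδ0, hδ1, hδeq⟩ := exists_combo (ne_of_gt hT2ppos)
          (mul_nonpos_iff.mpr (Or.inl ⟨le_of_lt hT2ppos, hT2x2⟩))
        set c2 : Pt := w2 + δ • (x2 - w2) with hc2def
        have hc2 : c2 - w2 = δ • (x2 - w2) := by rw [hc2def, add_sub_cancel_left]
        have hT2c2 : dd v1 w1 c2 = 0 := by rw [dd_affine v1 w1 hc2]; exact hδeq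
        obtain ⟨γ, hγ⟩ := collinear_param hvw hT2c2
        have hGc2 : dd w2 x2 c2 = 0 := by
          rw [dd_affine w2 x2 hc2, dd_self1, dd_self2]; ring
        have hGeq : (1 - γ) * dd w2 x2 v1 + γ * dd w2 x2 w1 = 0 := by
          rw [← dd_affine w2 x2 hγ]; exact hGc2
        have hWG : (0 ≤ dd w2 x2 v1 ∧ dd w2 x2 w1 ≤ 0) ∨
            (0 ≤ dd w2 x2 w1 ∧ dd w2 x2 v1 ≤ 0) := by
          rcases hI3c4 with ⟨hl1, hl2⟩ | ⟨hl1, hl2⟩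
          · left
            refine ⟨nonneg_of_left hl1, ?_⟩
            have := nonneg_of_left hl2; rw [dd_swap12] at this; linarith
          · right
            refine ⟨nonneg_of_left hl1, ?_⟩
            have := nonneg_of_left hl2; rw [dd_swap12] at this; linarith
        have hnbG : ¬ (dd w2 x2 v1 = 0 ∧ dd w2 x2 w1 = 0) := by
          rintro ⟨hz1, hz2⟩
          obtain ⟨k1, hk1⟩ := collinear_param hpx2 hz1
          obtain ⟨k2, hk2⟩ := collinear_param hpx2 hz2
          have := dd_zero_of_params hk1 hk2
          linarith
        obtain ⟨hγ0, hγ1⟩ := unit_range hGeq hWG hnbG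
        have hSc2 : dd w1 x1 c2 = (1 - γ) * dd w1 x1 v1 := by
          rw [dd_affine w1 x1 hγ, dd_self1]; ring
        have hSpSc2 : dd w1 x1 w2 * dd w1 x1 c2 ≤ 0 := by
          have hid : dd w1 x1 w2 * dd w1 x1 c2
              = (1 - γ) * (dd w1 x1 v1 * dd w1 x1 w2) := by rw [hSc2]; ring
          nlinarith
        obtain ⟨ρ, hρ0, hρ1, hρeq⟩ := exists_combo hSp0 hSpSc2
        have hν0 : 0 < ρ * δ := mul_pos hρ0 hδ0
        have hν1 : ρ * δ ≤ 1 := mul_le_one₀ hρ1 (le_of_lt hδ0) hδ1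
        have hν1' : ρ * δ < 1 := by
          rcases lt_or_eq_of_le hν1 with h' | h'
          · exact h'
          · exfalso
            have hρe : ρ = 1 := le_antisymm hρ1 (by nlinarith)
            have hδe : δ = 1 := le_antisymm hδ1 (by nlinarith)
            have hSc20 : dd w1 x1 c2 = 0 := by
              rw [hρe] at hρeq; linarith
            have hγe : γ = 1 := by
              rw [hSc2] at hSc20
              rcases mul_eq_zero.mp hSc20 with h'' | h''
              · linarith
              · exact absurd h'' hSv
            have hc2w : c2 = w1 := by
              rw [hγe, one_smul] at hγ
              exact sub_left_inj.mp hγ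
            have hc2x2 : c2 = x2 := by
              rw [hδe, one_smul] at hc2
              exact sub_left_inj.mp hc2
            have hx2w : x2 = w1 := hc2x2 ▸ hc2w
            rcases hI3c3 with ⟨-, hl⟩ | ⟨-, hl⟩
            · rw [hx2w] at hl
              obtain ⟨t, ht0, htr⟩ := left_zero_ray hl (dd_self1 _ _)
              rw [sub_self] at htr
              rcases smul_eq_zero.mp htr.symm with h'' | h''
              · linarith
              · exact hvw (sub_eq_zero.mp h'')
            · exact absurd hl hnlwv
        set z : Pt := w2 + (ρ * δ) • (x2 - w2) with hzdef
        have hz : z - w2 = (ρ * δ) • (x2 - w2) := by rw [hzdef, add_sub_cancel_left]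
        have hzρ : z - w2 = ρ • (c2 - w2) := by rw [hz, hc2, smul_smul]
        have hSz : dd w1 x1 z = 0 := by rw [dd_affine w1 x1 hzρ]; exact hρeq
        have hSx2eq : (1 - ρ * δ) * dd w1 x1 w2 + (ρ * δ) * dd w1 x1 x2 = 0 := by
          rw [← dd_affine w1 x1 hz]; exact hSz
        have hSpSx2 : dd w1 x1 w2 * dd w1 x1 x2 < 0 :=
          combo_product_neg hSp0 hν0 hν1' hSx2eq
        have hT1c2 : dd u1 v1 c2 = (1 - γ) * dd u1 v1 v1 + γ * dd u1 v1 w1 := dd_affine _ _ hγ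
        rw [dd_self2] at hT1c2
        have hT3c2 : dd w1 u1 c2 = (1 - γ) * dd w1 u1 v1 + γ * dd w1 u1 w1 := dd_affine _ _ hγ
        rw [dd_self1, dd_rot' u1 v1 w1] at hT3c2
        have hT1z : 0 ≤ dd u1 v1 z := by
          rw [dd_affine u1 v1 hzρ, hT1c2]
          nlinarith [mul_nonneg (sub_nonneg.mpr hρ1) (le_of_lt hT1pos),
            mul_nonneg (mul_nonneg (le_of_lt hρ0) hγ0) (le_of_lt hΔ)]
        have hT2z : 0 ≤ dd v1 w1 z := by
          rw [dd_affine v1 w1 hzρ, hT2c2]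
          nlinarith [mul_nonneg (sub_nonneg.mpr hρ1) (le_of_lt hT2ppos)]
        have hT3z : 0 ≤ dd w1 u1 z := by
          rw [dd_affine w1 u1 hzρ, hT3c2]
          nlinarith [mul_nonneg (sub_nonneg.mpr hρ1) hT3p,
            mul_nonneg (mul_nonneg (le_of_lt hρ0) (sub_nonneg.mpr hγ1)) (le_of_lt hΔ)]
        obtain ⟨θ, hθ, hθ0, hθ1⟩ := key z hSz hT1z hT2z hT3z
        rcases lt_or_eq_of_le hθ0 with hθ0' | hθ0'
        · rcases lt_or_eq_of_le hθ1 with hθ1' | hθ1'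
          · have hGz : dd w2 x2 z = 0 := by
              rw [dd_affine w2 x2 hz, dd_self1, dd_self2]; ring
            have hGweq : (1 - θ) * dd w2 x2 w1 + θ * dd w2 x2 x1 = 0 := by
              rw [← dd_affine w2 x2 hθ]; exact hGz
            have hGw : dd w2 x2 w1 ≠ 0 := by
              intro h0'
              have h1' : θ * dd w2 x2 x1 = 0 := by rw [h0'] at hGweq; linarith
              have hGx1 : dd w2 x2 x1 = 0 := by
                rcases mul_eq_zero.mp h1' with h'' | h''
                · linarith
                · exact h''
              obtain ⟨k1, hk1⟩ := collinear_param hpx2 h0'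
              obtain ⟨k2, hk2⟩ := collinear_param hpx2 hGx1
              exact hSp0 (dd_zero_of_params hk1 hk2)
            have hGwGx1 : dd w2 x2 w1 * dd w2 x2 x1 < 0 :=
              combo_product_neg hGw hθ0' hθ1' hGweq
            exact hF3 w1 x1 w2 x2 ⟨h2, h4⟩ (inter_of_products hSpSx2 hGwGx1)
          · have hzx1 : z = x1 := by
              rw [hθ1', one_smul] at hθ
              exact sub_left_inj.mp hθ
            have hb : x1 - w2 = (ρ * δ) • (x2 - w2) := by rw [← hzx1]; exact hz
            exact killF4 w2 x2 x1 h4 Vx1 _ hb hν0 hν1'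
        · have hzw : z = w1 := by
            rw [← hθ0', zero_smul] at hθ
            exact sub_eq_zero.mp hθ
          have hb : w1 - w2 = (ρ * δ) • (x2 - w2) := by rw [← hzw]; exact hz
          exact killF4 w2 x2 w1 h4 Vw1 _ hb hν0 hν1'
      · rcases mul_eq_zero.mp hzero with h' | h'
        · exact hSv h'
        · exact hSp0 h'
      · -- P− : w2 on the v1-side of the line w1 x1
        have hMu : dd v1 w2 u1 = dd u1 v1 w2 := dd_rot _ _ _
        have hnlp : ¬ left w2 v1 u1 := by
          intro hl
          have := nonneg_of_left hl
          rw [dd_swap12, hMu] at this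
          linarith
        have hMx3 : dd v1 w2 x3 ≤ 0 := by
          rcases hI6c3 with ⟨-, hl⟩ | ⟨-, hl⟩
          · have := nonneg_of_left hl; rw [dd_swap12] at this; linarith
          · exact absurd hl hnlp
        obtain ⟨β, hβ0, hβ1, hβeq⟩ := exists_combo
          (show dd v1 w2 u1 ≠ 0 by rw [hMu]; exact ne_of_gt hT1pos)
          (mul_nonpos_iff.mpr (Or.inl ⟨by rw [hMu]; exact le_of_lt hT1pos, hMx3⟩))
        set c3 : Pt := u1 + β • (x3 - u1) with hc3def
        have hc3 : c3 - u1 = β • (x3 - u1) := by rw [hc3def, add_sub_cancel_left]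
        have hMc3 : dd v1 w2 c3 = 0 := by rw [dd_affine v1 w2 hc3]; exact hβeq
        obtain ⟨α, hα⟩ := collinear_param hvp hMc3
        have hNc3 : dd u1 x3 c3 = 0 := by
          rw [dd_affine u1 x3 hc3, dd_self1, dd_self2]; ring
        have hNeq : (1 - α) * dd u1 x3 v1 + α * dd u1 x3 w2 = 0 := by
          rw [← dd_affine u1 x3 hα]; exact hNc3
        have hWN : (0 ≤ dd u1 x3 v1 ∧ dd u1 x3 w2 ≤ 0) ∨
            (0 ≤ dd u1 x3 w2 ∧ dd u1 x3 v1 ≤ 0) := by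
          rcases hI6c4 with ⟨hl1, hl2⟩ | ⟨hl1, hl2⟩
          · left
            refine ⟨nonneg_of_left hl1, ?_⟩
            have := nonneg_of_left hl2; rw [dd_swap12] at this; linarith
          · right
            refine ⟨nonneg_of_left hl1, ?_⟩
            have := nonneg_of_left hl2; rw [dd_swap12] at this; linarith
        have hnbN : ¬ (dd u1 x3 v1 = 0 ∧ dd u1 x3 w2 = 0) := by
          rintro ⟨hz1, hz2⟩
          obtain ⟨k1, hk1⟩ := collinear_param hux3 hz1
          obtain ⟨k2, hk2⟩ := collinear_param hux3 hz2
          have := dd_zero_of_params hk1 hk2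
          rw [hMu] at this
          linarith
        obtain ⟨hα0, hα1⟩ := unit_range hNeq hWN hnbN
        have hSc3 : dd w1 x1 c3 = (1 - α) * dd w1 x1 v1 + α * dd w1 x1 w2 := dd_affine _ _ hα
        have hSvSc3 : 0 < dd w1 x1 v1 * dd w1 x1 c3 := by
          rcases lt_or_eq_of_le hα0 with h' | h'
          · rw [hSc3]; nlinarith [mul_self_pos.mpr hSv]
          · rw [hSc3, ← h']; nlinarith [mul_self_pos.mpr hSv]
        have hSuSc3 : dd w1 x1 u1 * dd w1 x1 c3 < 0 := sign_transfer hSuSv hSvSc3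
        have hSc3ne : dd w1 x1 c3 ≠ 0 := by
          intro h'; rw [h', mul_zero] at hSvSc3; exact lt_irrefl 0 hSvSc3
        obtain ⟨ρ, hρ0, hρ1, hρeq⟩ := exists_combo hSu (le_of_lt hSuSc3)
        have hρ1' : ρ < 1 := by
          rcases lt_or_eq_of_le hρ1 with h' | h'
          · exact h'
          · exfalso
            apply hSc3ne
            rw [h'] at hρeq
            linarith
        have hν0 : 0 < ρ * β := mul_pos hρ0 hβ0
        have hν1 : ρ * β < 1 :=
          lt_of_le_of_lt (mul_le_of_le_one_right (le_of_lt hρ0) hβ1) hρ1'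
        set z : Pt := u1 + (ρ * β) • (x3 - u1) with hzdef
        have hz : z - u1 = (ρ * β) • (x3 - u1) := by rw [hzdef, add_sub_cancel_left]
        have hzρ : z - u1 = ρ • (c3 - u1) := by rw [hz, hc3, smul_smul]
        have hSz : dd w1 x1 z = 0 := by rw [dd_affine w1 x1 hzρ]; exact hρeq
        have hSx3eq : (1 - ρ * β) * dd w1 x1 u1 + (ρ * β) * dd w1 x1 x3 = 0 := by
          rw [← dd_affine w1 x1 hz]; exact hSz
        have hSuSx3 : dd w1 x1 u1 * dd w1 x1 x3 < 0 :=
          combo_product_neg hSu hν0 hν1 hSx3eq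
        have hT1c3 : dd u1 v1 c3 = (1 - α) * dd u1 v1 v1 + α * dd u1 v1 w2 := dd_affine _ _ hα
        rw [dd_self2] at hT1c3
        have hT2c3 : dd v1 w1 c3 = (1 - α) * dd v1 w1 v1 + α * dd v1 w1 w2 := dd_affine _ _ hα
        rw [dd_self1] at hT2c3
        have hT3c3 : dd w1 u1 c3 = (1 - α) * dd w1 u1 v1 + α * dd w1 u1 w2 := dd_affine _ _ hα
        rw [dd_rot' u1 v1 w1] at hT3c3
        have hT1z : 0 ≤ dd u1 v1 z := by
          rw [dd_affine u1 v1 hzρ, dd_self1, hT1c3]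
          nlinarith [mul_nonneg (mul_nonneg (le_of_lt hρ0) hα0) (le_of_lt hT1pos)]
        have hT2z : 0 ≤ dd v1 w1 z := by
          rw [dd_affine v1 w1 hzρ, hT2c3]
          have hr : dd v1 w1 u1 = dd u1 v1 w1 := dd_rot _ _ _
          rw [hr]
          nlinarith [mul_nonneg (sub_nonneg.mpr (le_of_lt hρ1')) (le_of_lt hΔ),
            mul_nonneg (mul_nonneg (le_of_lt hρ0) hα0) hT2p]
        have hT3z : 0 ≤ dd w1 u1 z := by
          rw [dd_affine w1 u1 hzρ, dd_self2, hT3c3]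
          nlinarith [mul_nonneg (mul_nonneg (le_of_lt hρ0) (sub_nonneg.mpr hα1)) (le_of_lt hΔ),
            mul_nonneg (mul_nonneg (le_of_lt hρ0) hα0) hT3p]
        obtain ⟨θ, hθ, hθ0, hθ1⟩ := key z hSz hT1z hT2z hT3z
        rcases lt_or_eq_of_le hθ0 with hθ0' | hθ0'
        · rcases lt_or_eq_of_le hθ1 with hθ1' | hθ1'
          · have hNz : dd u1 x3 z = 0 := by
              rw [dd_affine u1 x3 hz, dd_self1, dd_self2]; ring
            have hNweq : (1 - θ) * dd u1 x3 w1 + θ * dd u1 x3 x1 = 0 := by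
              rw [← dd_affine u1 x3 hθ]; exact hNz
            have hNw : dd u1 x3 w1 ≠ 0 := by
              intro h0'
              have h1' : θ * dd u1 x3 x1 = 0 := by rw [h0'] at hNweq; linarith
              have hNx1 : dd u1 x3 x1 = 0 := by
                rcases mul_eq_zero.mp h1' with h'' | h''
                · linarith
                · exact h''
              obtain ⟨k1, hk1⟩ := collinear_param hux3 h0'
              obtain ⟨k2, hk2⟩ := collinear_param hux3 hNx1
              exact hSu (dd_zero_of_params hk1 hk2)
            have hNwNx1 : dd u1 x3 w1 * dd u1 x3 x1 < 0 :=
              combo_product_neg hNw hθ0' hθ1' hNweq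
            exact hF3 w1 x1 u1 x3 ⟨h2, h7⟩ (inter_of_products hSuSx3 hNwNx1)
          · have hzx1 : z = x1 := by
              rw [hθ1', one_smul] at hθ
              exact sub_left_inj.mp hθ
            have hb : x1 - u1 = (ρ * β) • (x3 - u1) := by rw [← hzx1]; exact hz
            exact killF4 u1 x3 x1 h7 Vx1 _ hb hν0 hν1
        · have hzw : z = w1 := by
            rw [← hθ0', zero_smul] at hθ
            exact sub_eq_zero.mp hθ
          have hb : w1 - u1 = (ρ * β) • (x3 - u1) := by rw [← hzw]; exact hz
          exact killF4 u1 x3 w1 h7 Vw1 _ hb hν0 hν1
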